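/- Let (Y,X) be random variables with Y real-valued and X taking values in ℝ^d, and let g : ℝ^d × ℝ → ℝ be measurable such that for every x ∈ ℝ^d the map y ↦ g(x,y) is continuously differentiable with everywhere positive derivative ∂_y g(x,y) > 0 and satisfies lim_{y→−∞} g(x,y) = −∞ and lim_{y→+∞} g(x,y) = +∞. If e := g(X,Y) is independent of X and has the standard normal distribution N(0,1), then for every Borel set B ⊆ ℝ and every Borel set A ⊆ ℝ^d, P({Y ∈ B} ∩ {X ∈ A}) = E[1_{A}(X) · ∫_B φ(g(X,t)) ∂_y g(X,t) dt]; that is, the conditional density of Y given X is f_{Y|X}(y|X) = φ(g(X,y)) ∂_y g(X,y) almost surely. -/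

import Mathlib

open MeasureTheory ProbabilityTheory Set Filter Topology

/-- The standard normal probability density function φ. -/
noncomputable def stdGaussianPDF (x : ℝ) : ℝ :=
  (Real.sqrt (2 * Real.pi))⁻¹ * Real.exp (-(x ^ 2) / 2)

lemma stdGaussianPDF_eq_gaussianPDFReal (x : ℝ) :
    gaussianPDFReal 0 1 x = stdGaussianPDF x := by
  simp [gaussianPDFReal, stdGaussianPDF]

lemma continuous_stdGaussianPDF : Continuous stdGaussianPDF := by
  unfold stdGaussianPDF
  fun_prop

lemma stdGaussianPDF_nonneg (x : ℝ) : 0 ≤ stdGaussianPDF x := by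
  unfold stdGaussianPDF
  positivity

/-- If `e = g(X,Y)` is standard normal and independent of `X`, with `y ↦ g(x,y)` continuously
differentiable with everywhere positive derivative and tending to `∓∞` at `∓∞`, then the
conditional density of `Y` given `X` is `φ(g(X,y)) ∂_y g(X,y)`:
`P({Y ∈ B} ∩ {X ∈ A}) = E[1_A(X) ∫_B φ(g(X,t)) ∂_y g(X,t) dt]`. -/
theorem conditional_density_of_gaussian_transform
    {Ω : Type*} [MeasureSpace Ω] [IsProbabilityMeasure (ℙ : Measure Ω)]
    {d : ℕ} (Y : Ω → ℝ) (X : Ω → (Fin d → ℝ))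
    (hY : Measurable Y) (hX : Measurable X)
    (g g' : (Fin d → ℝ) × ℝ → ℝ) (hg : Measurable g)
    (hderiv : ∀ (x : Fin d → ℝ) (y : ℝ), HasDerivAt (fun z => g (x, z)) (g' (x, y)) y)
    (hcont : ∀ x : Fin d → ℝ, Continuous (fun y => g' (x, y)))
    (hpos : ∀ (x : Fin d → ℝ) (y : ℝ), 0 < g' (x, y))
    (hbot : ∀ x : Fin d → ℝ, Tendsto (fun y => g (x, y)) atBot atBot)
    (htop : ∀ x : Fin d → ℝ, Tendsto (fun y => g (x, y)) atTop atTop)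
    (hindep : IndepFun (fun ω => g (X ω, Y ω)) X ℙ)
    (hgauss : Measure.map (fun ω => g (X ω, Y ω)) ℙ = gaussianReal 0 1) :
    ∀ (B : Set ℝ) (A : Set (Fin d → ℝ)), MeasurableSet B → MeasurableSet A →
      (ℙ ({ω | Y ω ∈ B} ∩ X ⁻¹' A)).toReal
        = ∫ ω in X ⁻¹' A, (∫ t in B, stdGaussianPDF (g (X ω, t)) * g' (X ω, t)) ∂ℙ := by
  intro B A hB hA
  -- strict monotonicity and surjectivity of `y ↦ g (x, y)`
  have hmono : ∀ x : Fin d → ℝ, StrictMono (fun y => g (x, y)) := by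
    intro x
    refine strictMono_of_deriv_pos (fun y => ?_)
    rw [(hderiv x y).deriv]
    exact hpos x y
  have hcontg : ∀ x : Fin d → ℝ, Continuous (fun y => g (x, y)) := by
    intro x
    exact continuous_iff_continuousAt.2 fun y => (hderiv x y).continuousAt
  have hsurj : ∀ (x : Fin d → ℝ) (u : ℝ), ∃ y, g (x, y) = u := by
    intro x u
    exact (hcontg x).surjective (htop x) (hbot x) u
  choose H hH using hsurj
  -- basic properties of the inverse H
  have H_le_iff : ∀ (x : Fin d → ℝ) (u a : ℝ), H x u ≤ a ↔ u ≤ g (x, a) := by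
    intro x u a
    rw [← (hmono x).le_iff_le (a := H x u) (b := a), hH]
  have hHm : Measurable (fun p : (Fin d → ℝ) × ℝ => H p.1 p.2) := by
    refine measurable_of_Iic (fun a => ?_)
    have : (fun p : (Fin d → ℝ) × ℝ => H p.1 p.2) ⁻¹' Iic a
        = {p : (Fin d → ℝ) × ℝ | p.2 ≤ g (p.1, a)} := by
      ext p
      simp [H_le_iff]
    rw [this]
    exact measurableSet_le measurable_snd (hg.comp (measurable_fst.prodMk measurable_const))
  -- joint measurability of g'
  have hg'm : Measurable g' := by
    have key : ∀ p : (Fin d → ℝ) × ℝ,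
        Tendsto (fun n : ℕ => (g (p.1, p.2 + ((n : ℝ) + 1)⁻¹) - g p) * ((n : ℝ) + 1))
          atTop (𝓝 (g' p)) := by
      rintro ⟨x, y⟩
      have h0 : Tendsto (fun n : ℕ => y + ((n : ℝ) + 1)⁻¹) atTop (𝓝[≠] y) := by
        refine tendsto_nhdsWithin_of_tendsto_nhds_of_eventually_within _ ?_ ?_
        · have : Tendsto (fun n : ℕ => ((n : ℝ) + 1)⁻¹) atTop (𝓝 0) := by
            simpa [one_div] using tendsto_one_div_add_atTop_nhds_zero_nat (𝕜 := ℝ)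
          simpa using tendsto_const_nhds.add this
        · filter_upwards with n
          have : (0 : ℝ) < ((n : ℝ) + 1)⁻¹ := by positivity
          simp only [mem_compl_iff, mem_singleton_iff]
          intro h
          nlinarith [this]
      have h2 := (hasDerivAt_iff_tendsto_slope.mp (hderiv x y)).comp h0
      refine h2.congr (fun n => ?_)
      have hne : ((n : ℝ) + 1)⁻¹ ≠ 0 := by positivity
      rw [Function.comp_apply, slope_def_field,
        show y + ((n : ℝ) + 1)⁻¹ - y = ((n : ℝ) + 1)⁻¹ from by ring, div_inv_eq_mul]
    refine measurable_of_tendsto_metrizable (fun n => ?_) (tendsto_pi_nhds.mpr key)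
    exact ((hg.comp (measurable_fst.prodMk (measurable_snd.add_const _))).sub hg).mul
      measurable_const
  -- the density and its measurability
  set F : (Fin d → ℝ) → ℝ := fun x => ∫ t in B, stdGaussianPDF (g (x, t)) * g' (x, t) with hF_def
  have hFsm : StronglyMeasurable F := by
    have : StronglyMeasurable (fun p : (Fin d → ℝ) × ℝ => stdGaussianPDF (g p) * g' p) :=
      ((continuous_stdGaussianPDF.measurable.comp hg).mul hg'm).stronglyMeasurable
    exact this.integral_prod_right'
  have hFnn : ∀ x, 0 ≤ F x := by
    intro x
    refine integral_nonneg (fun t => ?_)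
    exact mul_nonneg (stdGaussianPDF_nonneg _) (hpos x t).le
  -- image of B under g (x, ·) and the change of variables
  have himage : ∀ x : Fin d → ℝ, (fun y => g (x, y)) '' B = {u | H x u ∈ B} := by
    intro x
    ext u
    constructor
    · rintro ⟨t, ht, rfl⟩
      have : H x (g (x, t)) = t := (hmono x).injective (by rw [hH])
      simpa [this] using ht
    · intro hu
      exact ⟨H x u, hu, hH x u⟩
  have himage_meas : ∀ x : Fin d → ℝ, MeasurableSet ((fun y => g (x, y)) '' B) := by
    intro x
    rw [himage]
    exact (hHm.comp measurable_prodMk_left) hB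
  have hgauss_img : ∀ x : Fin d → ℝ,
      gaussianReal 0 1 ((fun y => g (x, y)) '' B) = ENNReal.ofReal (F x) := by
    intro x
    rw [gaussianReal_apply_eq_integral 0 one_ne_zero]
    congr 1
    have hchg := integral_image_eq_integral_abs_deriv_smul (f := fun y => g (x, y))
      (f' := fun t => g' (x, t)) hB (fun t _ => (hderiv x t).hasDerivWithinAt)
      ((hmono x).injective.injOn) stdGaussianPDF
    calc ∫ u in (fun y => g (x, y)) '' B, gaussianPDFReal 0 1 u
        = ∫ u in (fun y => g (x, y)) '' B, stdGaussianPDF u := by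
          simp only [stdGaussianPDF_eq_gaussianPDFReal]
      _ = ∫ t in B, |g' (x, t)| • stdGaussianPDF (g (x, t)) := hchg
      _ = F x := by
          refine setIntegral_congr_fun hB (fun t _ => ?_)
          rw [abs_of_pos (hpos x t), smul_eq_mul, mul_comm]
  -- joint law of (X, e)
  set e : Ω → ℝ := fun ω => g (X ω, Y ω) with he_def
  have hem : Measurable e := hg.comp (hX.prodMk hY)
  have hmap : Measure.map (fun ω => (X ω, e ω)) ℙ = (Measure.map X ℙ).prod (gaussianReal 0 1) := by
    rw [← hgauss]
    exact (indepFun_iff_map_prod_eq_prod_map_map hX.aemeasurable hem.aemeasurable).mp hindep.symm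
  -- the target set
  set S : Set ((Fin d → ℝ) × ℝ) :=
    (Prod.fst ⁻¹' A) ∩ ((fun p : (Fin d → ℝ) × ℝ => H p.1 p.2) ⁻¹' B) with hS_def
  have hS : MeasurableSet S := (measurable_fst hA).inter (hHm hB)
  have hYH : ∀ ω, H (X ω) (e ω) = Y ω := by
    intro ω
    exact (hmono (X ω)).injective (by rw [hH])
  have hevent : {ω | Y ω ∈ B} ∩ X ⁻¹' A = (fun ω => (X ω, e ω)) ⁻¹' S := by
    ext ω
    simp only [hS_def, mem_inter_iff, mem_setOf_eq, mem_preimage, hYH]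
    tauto
  -- compute the measure of the event
  have hslice : ∀ x : Fin d → ℝ,
      gaussianReal 0 1 (Prod.mk x ⁻¹' S) = A.indicator (fun x => ENNReal.ofReal (F x)) x := by
    intro x
    by_cases hx : x ∈ A
    · have : Prod.mk x ⁻¹' S = {u | H x u ∈ B} := by
        ext u; simp [hS_def, hx]
      rw [this, ← himage, hgauss_img, indicator_of_mem hx]
    · have : Prod.mk x ⁻¹' S = ∅ := by
        ext u; simp [hS_def, hx]
      rw [this, measure_empty, indicator_of_notMem hx]
  have hLHS : ℙ ({ω | Y ω ∈ B} ∩ X ⁻¹' A)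
      = ∫⁻ x in A, ENNReal.ofReal (F x) ∂(Measure.map X ℙ) := by
    rw [hevent, ← Measure.map_apply (hX.prodMk hem) hS, hmap, Measure.prod_apply hS]
    rw [← lintegral_indicator hA]
    exact lintegral_congr hslice
  -- compute the right-hand side
  have hRHS : ∫ ω in X ⁻¹' A, F (X ω) ∂ℙ = ∫ x in A, F x ∂(Measure.map X ℙ) :=
    (setIntegral_map hA hFsm.aestronglyMeasurable hX.aemeasurable).symm
  have hRHS2 : ∫ x in A, F x ∂(Measure.map X ℙ)
      = (∫⁻ x in A, ENNReal.ofReal (F x) ∂(Measure.map X ℙ)).toReal := by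
    rw [integral_eq_lintegral_of_nonneg_ae (ae_of_all _ hFnn)
      hFsm.aestronglyMeasurable.restrict]
  rw [hLHS, ← hRHS2, ← hRHS]
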